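/- For all (g_1,…,g_n) ∈ G^n and (h_1,…,h_{n−1}) ∈ G^{n−1}, the trace of the operator R^{g_1}_1 ⋯ R^{g_n}_n · S̃^{(h_1)}_1 ⋯ S̃^{(h_{n−1})}_{n−1} on H_n equals |G| if g_i = e for all i, and equals 0 otherwise. Consequently the normalized trace (1/|G|^n)·Tr takes the value |G|^{1−n} on such an operator when all g_i = e and 0 otherwise. -/

import Mathlib

noncomputable section

open scoped BigOperators

/-- The Hilbert space `H_n = ℂ[G]^{⊗ n}`, realized as functions `G^n → ℂ`;
the basis ket `|g₁,…,g_n⟩` is the indicator function of `(g₁,…,g_n)`. -/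
abbrev Hn (G : Type) (n : ℕ) : Type := (Fin n → G) → ℂ

variable (G : Type) [Group G] [Fintype G] [DecidableEq G] (n : ℕ)

/-- Diagonal operator with diagonal entries `c` (in the ket basis). -/
def diagOp (c : (Fin n → G) → ℂ) : Module.End ℂ (Hn G n) where
  toFun f := fun x => c x * f x
  map_add' f g := by funext x; simp only [Pi.add_apply]; ring
  map_smul' r f := by
    funext x
    simp only [Pi.smul_apply, smul_eq_mul, RingHom.id_apply]
    ring

/-- The operator sending the ket `|y⟩` to the ket `|σ y⟩`, where `τ = σ⁻¹`. -/
def permOp (τ : (Fin n → G) → (Fin n → G)) : Module.End ℂ (Hn G n) :=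
  LinearMap.funLeft ℂ ℂ τ

/-- `R^g_i`: right translation at site `i`, `|…, g_i, …⟩ ↦ |…, g_i g, …⟩`. -/
def Rop (i : Fin n) (g : G) : Module.End ℂ (Hn G n) :=
  permOp G n fun x => Function.update x i (x i * g⁻¹)

/-- `S̃^{(h)}` at sites `i` and `j` (used with `j = i + 1`): the projection onto
kets with `g_i⁻¹ g_j = h`. -/
def Sop (i j : Fin n) (h : G) : Module.End ℂ (Hn G n) :=
  diagOp G n fun x => if (x i)⁻¹ * x j = h then 1 else 0

/-- `U_g`: the diagonal left translation `|g₁,…,g_n⟩ ↦ |g g₁,…,g g_n⟩`. -/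
def Uop (g : G) : Module.End ℂ (Hn G n) :=
  permOp G n fun x k => g⁻¹ * x k

/-- Generators `R^g_i` and `S̃^{(h)}_i` of the smooth boundary algebra. -/
def smoothGens : Set (Module.End ℂ (Hn G n)) :=
  {T | ∃ (i : Fin n) (g : G), T = Rop G n i g} ∪
  {T | ∃ (i j : Fin n) (h : G), (i : ℕ) + 1 = (j : ℕ) ∧ T = Sop G n i j h}

/-- The smooth boundary algebra `𝔇ⁿ_smooth`. -/
def DSmooth : Subalgebra ℂ (Module.End ℂ (Hn G n)) :=
  Algebra.adjoin ℂ (smoothGens G n)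

/-- The site `i` (0-indexed) of a neighboring pair, as an element of `Fin n`. -/
def idx1 {n : ℕ} (i : Fin (n - 1)) : Fin n := ⟨i, by have := i.isLt; omega⟩

/-- The site `i + 1` of a neighboring pair, as an element of `Fin n`. -/
def idx2 {n : ℕ} (i : Fin (n - 1)) : Fin n := ⟨(i : ℕ) + 1, by have := i.isLt; omega⟩

/-- The word `R^{g₁}_1 ⋯ R^{g_n}_n · S̃^{(h₁)}_1 ⋯ S̃^{(h_{n-1})}_{n-1}`. -/
def smoothWord (g : Fin n → G) (h : Fin (n - 1) → G) : Module.End ℂ (Hn G n) :=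
  (List.ofFn fun i : Fin n => Rop G n i (g i)).prod *
  (List.ofFn fun i : Fin (n - 1) => Sop G n (idx1 i) (idx2 i) (h i)).prod


section Aux

set_option linter.unusedSectionVars false

variable {G n}

lemma permOp_list_prod (L : List ((Fin n → G) → (Fin n → G))) (f : Hn G n) (x : Fin n → G) :
    (L.map (permOp G n)).prod f x = f (L.foldl (fun y τ => τ y) x) := by
  induction L generalizing x with
  | nil => simp
  | cons τ t ih =>
    simp only [List.map_cons, List.prod_cons, List.foldl_cons, Module.End.mul_apply]
    exact ih (τ x)

lemma diagOp_list_prod (L : List ((Fin n → G) → ℂ)) (f : Hn G n) (x : Fin n → G) :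
    (L.map (diagOp G n)).prod f x = (L.map (fun c => c x)).prod * f x := by
  induction L with
  | nil => simp
  | cons c t ih =>
    simp only [List.map_cons, List.prod_cons, Module.End.mul_apply]
    show c x * _ = _
    rw [ih, mul_assoc]

lemma foldl_update (g : Fin n → G) (l : List (Fin n)) (hl : l.Nodup) (x : Fin n → G)
    (j : Fin n) :
    (l.foldl (fun y i => Function.update y i (y i * (g i)⁻¹)) x) j =
      if j ∈ l then x j * (g j)⁻¹ else x j := by
  induction l generalizing x with
  | nil => simp
  | cons i t ih =>
    simp only [List.foldl_cons]
    rw [ih (List.nodup_cons.mp hl).2]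
    rcases eq_or_ne j i with rfl | hj
    · have hj' : j ∉ t := (List.nodup_cons.mp hl).1
      simp [hj']
    · by_cases hmem : j ∈ t <;>
        simp [Function.update_of_ne hj, hmem, hj]

lemma Rprod_apply (g : Fin n → G) (f : Hn G n) (x : Fin n → G) :
    (List.ofFn fun i : Fin n => Rop G n i (g i)).prod f x = f (fun j => x j * (g j)⁻¹) := by
  have hL : (List.ofFn fun i : Fin n => Rop G n i (g i)) =
      ((List.finRange n).map (fun i => fun y => Function.update y i (y i * (g i)⁻¹))).map
        (permOp G n) := by
    rw [List.ofFn_eq_map, List.map_map]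
    rfl
  rw [hL, permOp_list_prod, List.foldl_map]
  congr 1
  funext j
  rw [foldl_update g _ (List.nodup_finRange n)]
  simp

lemma Sprod_apply (h : Fin (n-1) → G) (f : Hn G n) (x : Fin n → G) :
    (List.ofFn fun i : Fin (n - 1) => Sop G n (idx1 i) (idx2 i) (h i)).prod f x =
      (∏ i : Fin (n-1), if (x (idx1 i))⁻¹ * x (idx2 i) = h i then (1:ℂ) else 0) * f x := by
  have hL : (List.ofFn fun i : Fin (n - 1) => Sop G n (idx1 i) (idx2 i) (h i)) =
      ((List.finRange (n-1)).map
        (fun i => fun y : Fin n → G =>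
          if (y (idx1 i))⁻¹ * y (idx2 i) = h i then (1:ℂ) else 0)).map
        (diagOp G n) := by
    rw [List.ofFn_eq_map, List.map_map]
    rfl
  rw [hL, diagOp_list_prod, List.map_map, ← List.ofFn_eq_map, List.prod_ofFn]
  rfl

lemma smoothWord_apply (g : Fin n → G) (h : Fin (n-1) → G) (f : Hn G n) (x : Fin n → G) :
    smoothWord G n g h f x =
      (∏ i : Fin (n-1), if ((fun j => x j * (g j)⁻¹) (idx1 i))⁻¹ *
          ((fun j => x j * (g j)⁻¹) (idx2 i)) = h i then (1:ℂ) else 0) *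
        f (fun j => x j * (g j)⁻¹) := by
  rw [smoothWord, Module.End.mul_apply, Rprod_apply, Sprod_apply]

lemma trace_formula (T : Module.End ℂ (Hn G n)) :
    LinearMap.trace ℂ (Hn G n) T = ∑ x : Fin n → G, T (Pi.single x 1) x := by
  rw [LinearMap.trace_eq_matrix_trace ℂ (Pi.basisFun ℂ (Fin n → G)) T]
  simp [Matrix.trace, Matrix.diag, LinearMap.toMatrix_apply, Pi.basisFun_apply,
    Pi.basisFun_repr]

variable (G n)

def pw (h : Fin (n-1) → G) : ℕ → G
  | 0 => 1
  | m+1 => pw h m * (if hm : m < n - 1 then h ⟨m, hm⟩ else 1)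

lemma sol_structure (h : Fin (n-1) → G) (x : Fin n → G) (hn : 0 < n)
    (hx : ∀ i : Fin (n-1), (x (idx1 i))⁻¹ * x (idx2 i) = h i) :
    ∀ m (hm : m < n), x ⟨m, hm⟩ = x ⟨0, hn⟩ * pw G n h m := by
  intro m
  induction m with
  | zero => intro hm; simp [pw]
  | succ m ih =>
    intro hm
    have hm' : m < n - 1 := by omega
    have hcond := hx ⟨m, hm'⟩
    simp only [idx1, idx2] at hcond
    have hxm : x ⟨m + 1, hm⟩ = x ⟨m, by omega⟩ * h ⟨m, hm'⟩ := by
      rw [← hcond, mul_inv_cancel_left]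
    rw [hxm, ih (by omega)]
    simp [pw, hm', mul_assoc]

lemma count_sol (h : Fin (n-1) → G) (hn : 0 < n) :
    (Finset.univ.filter
      (fun x : Fin n → G => ∀ i : Fin (n-1), (x (idx1 i))⁻¹ * x (idx2 i) = h i)).card =
      Fintype.card G := by
  rw [← Finset.card_univ]
  refine Finset.card_bij' (fun x _ => x ⟨0, hn⟩) (fun a _ => fun k => a * pw G n h k.1)
    (fun x hx => Finset.mem_univ _) ?hj ?left ?right
  case hj =>
    intro a _
    rw [Finset.mem_filter]
    refine ⟨Finset.mem_univ _, fun i => ?_⟩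
    have hi : (i : ℕ) < n - 1 := i.isLt
    simp only [idx1, idx2, mul_inv_rev, pw, hi, dif_pos]
    group
  case left =>
    intro x hx
    rw [Finset.mem_filter] at hx
    funext k
    show x ⟨0, hn⟩ * pw G n h k.1 = x k
    rw [← sol_structure G n h x hn hx.2 k.1 k.isLt]
  case right =>
    intro a _
    simp [pw]

end Aux

/-- the trace of `R^{g₁}_1 ⋯ R^{g_n}_n S̃^{(h₁)}_1 ⋯ S̃^{(h_{n-1})}_{n-1}`
equals `|G|` if all `g_i = e` and `0` otherwise; consequently the normalized trace
`(1/|G|^n)·Tr` takes the value `|G|^{1-n}` in the first case and `0` otherwise. -/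
theorem stmt10 (hn : 1 ≤ n) (g : Fin n → G) (h : Fin (n - 1) → G) :
    LinearMap.trace ℂ (Hn G n) (smoothWord G n g h) =
      (if ∀ i, g i = 1 then (Fintype.card G : ℂ) else 0) ∧
    ((Fintype.card G : ℂ) ^ n)⁻¹ * LinearMap.trace ℂ (Hn G n) (smoothWord G n g h) =
      (if ∀ i, g i = 1 then ((Fintype.card G : ℂ) ^ (n - 1))⁻¹ else 0) := by
  have hc : (Fintype.card G : ℂ) ≠ 0 := Nat.cast_ne_zero.mpr Fintype.card_ne_zero
  have htr : LinearMap.trace ℂ (Hn G n) (smoothWord G n g h) =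
      (if ∀ i, g i = 1 then (Fintype.card G : ℂ) else 0) := by
    rw [trace_formula]
    by_cases hg : ∀ i, g i = 1
    · have hτ : ∀ x : Fin n → G, (fun j => x j * (g j)⁻¹) = x := by
        intro x; funext j; simp [hg j]
      rw [if_pos hg]
      have hterm : ∀ x : Fin n → G, smoothWord G n g h (Pi.single x 1) x =
          if ∀ i : Fin (n-1), (x (idx1 i))⁻¹ * x (idx2 i) = h i then (1:ℂ) else 0 := by
        intro x
        rw [smoothWord_apply, hτ x, Pi.single_eq_same, mul_one, Finset.prod_boole]
        simp
      rw [Finset.sum_congr rfl (fun x _ => hterm x), Finset.sum_boole,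
        count_sol G n h hn]
    · rw [if_neg hg]
      obtain ⟨i0, hi0⟩ := not_forall.mp hg
      refine Finset.sum_eq_zero fun x _ => ?_
      rw [smoothWord_apply]
      have hzero : (Pi.single x (1:ℂ) : (Fin n → G) → ℂ) (fun j => x j * (g j)⁻¹) = 0 := by
        rw [Pi.single_apply, if_neg]
        intro hEq
        have := congrFun hEq i0
        simp only [mul_eq_left, inv_eq_one] at this
        exact hi0 this
      rw [hzero, mul_zero]
  refine ⟨htr, ?_⟩
  rw [htr]
  by_cases hg : ∀ i, g i = 1
  · rw [if_pos hg, if_pos hg]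
    conv_lhs => rw [show n = n - 1 + 1 from by omega]
    rw [pow_succ, mul_inv, mul_assoc, inv_mul_cancel₀ hc, mul_one]
  · rw [if_neg hg, if_neg hg, mul_zero]
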